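/- Consider an equilibrium point (C_bro, C_A, C_liv, C_tis) of the four-compartment acetone model with constant inputs, D = 0, q_bro > 0 and Q̇_c > 0. Set r_bro := V̇_A/(q_bro·Q̇_c). Then the measured concentration C_measured := C_bro satisfies C_bro = (r_bro·C_I + (1 − q_bro)·λ_b:air·C_A)/((1 − q_bro)·(λ_muc:air/λ_muc:b) + r_bro) = (r_bro·C_I + (1 − q_bro)·C_v̄)/((1 − q_bro)·(λ_muc:air/λ_muc:b) + r_bro) = (r_bro·C_I + C_a)/((λ_muc:air/λ_muc:b) + r_bro), where C_v̄ and C_a are the mixed venous and arterial concentrations of the model. -/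

import Mathlib

open Set Matrix

/-- Right-hand side of the four-compartment acetone model (constant inputs): the state is
`c = (C_bro, C_A, C_liv, C_tis)` (indices `0,1,2,3`). -/
noncomputable def acetoneRHS (Vbro VA Vliv Vtis lba lma lmb lbl lbt kpr kmet qbro qliv
    VdA Qc D CI : ℝ) (c : Fin 4 → ℝ) : Fin 4 → ℝ :=
  ![(VdA * (CI - c 0) + D * (c 1 - c 0) +
      qbro * Qc * (((1 - qbro) * lba * c 1 + qbro * (lma / lmb) * c 0) - (lma / lmb) * c 0)) / Vbro,
    (D * (c 0 - c 1) +
      (1 - qbro) * Qc * ((qliv * lbl * c 2 + (1 - qliv) * lbt * c 3) - lba * c 1)) / VA,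
    (kpr - kmet * lbl * c 2 +
      qliv * (1 - qbro) * Qc * (((1 - qbro) * lba * c 1 + qbro * (lma / lmb) * c 0)
        - lbl * c 2)) / Vliv,
    ((1 - qliv) * (1 - qbro) * Qc * (((1 - qbro) * lba * c 1 + qbro * (lma / lmb) * c 0)
        - lbt * c 3)) / Vtis]

/-- At an equilibrium of the four-compartment acetone model with constant
inputs, `D = 0`, `q_bro > 0` and `Q̇_c > 0`, the measured concentration `C_bro` satisfies
Equation (18) of the paper (purely bronchial gas exchange), in its three equivalent forms,
where `r_bro = V̇_A/(q_bro·Q̇_c)`. -/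
theorem acetone_steady_state_D_zero
    (Vbro VA Vliv Vtis lba lma lmb lbl lbt kpr kmet qbro qliv VdA Qc CI : ℝ)
    (Cbro CA Cliv Ctis : ℝ)
    (hVbro : 0 < Vbro) (hVA : 0 < VA) (hVliv : 0 < Vliv) (hVtis : 0 < Vtis)
    (hlba : 0 < lba) (hlma : 0 < lma) (hlmb : 0 < lmb) (hlbl : 0 < lbl) (hlbt : 0 < lbt)
    (hVdA : 0 ≤ VdA) (hQc : 0 < Qc) (hkpr : 0 ≤ kpr) (hkmet : 0 ≤ kmet)
    (hqbro0 : 0 < qbro) (hqbro1 : qbro < 1) (hqliv0 : 0 < qliv) (hqliv1 : qliv < 1)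
    (hequil : acetoneRHS Vbro VA Vliv Vtis lba lma lmb lbl lbt kpr kmet qbro qliv
      VdA Qc 0 CI ![Cbro, CA, Cliv, Ctis] = 0) :
    Cbro = (VdA / (qbro * Qc) * CI + (1 - qbro) * lba * CA) /
        ((1 - qbro) * (lma / lmb) + VdA / (qbro * Qc)) ∧
    Cbro = (VdA / (qbro * Qc) * CI +
        (1 - qbro) * (qliv * lbl * Cliv + (1 - qliv) * lbt * Ctis)) /
        ((1 - qbro) * (lma / lmb) + VdA / (qbro * Qc)) ∧
    Cbro = (VdA / (qbro * Qc) * CI + ((1 - qbro) * lba * CA + qbro * (lma / lmb) * Cbro)) /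
        ((lma / lmb) + VdA / (qbro * Qc)) := by
  have h0 := congrFun hequil 0
  have h1 := congrFun hequil 1
  simp [acetoneRHS] at h0 h1
  have hVbro' := hVbro.ne'
  have hVA' := hVA.ne'
  have hq1 : (0:ℝ) < 1 - qbro := by linarith
  have e0 : VdA * (CI - Cbro) +
      qbro * Qc * (((1 - qbro) * lba * CA + qbro * (lma / lmb) * Cbro) - (lma / lmb) * Cbro) = 0 := by
    rcases h0 with h | h
    · linarith [h]
    · exact absurd h hVbro'
  have hlmb' := hlmb.ne'
  have hqQ : qbro * Qc ≠ 0 := by positivity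
  have hvbar : qliv * lbl * Cliv + (1 - qliv) * lbt * Ctis = lba * CA := by
    rcases h1 with ((h | h) | h) | h
    · linarith
    · exact absurd h hQc.ne'
    · linarith
    · exact absurd h hVA' 
  have hden : (1 - qbro) * (lma / lmb) + VdA / (qbro * Qc) ≠ 0 := by positivity
  have hden2 : (lma / lmb) + VdA / (qbro * Qc) ≠ 0 := by positivity
  have key : Cbro = (VdA / (qbro * Qc) * CI + (1 - qbro) * lba * CA) /
      ((1 - qbro) * (lma / lmb) + VdA / (qbro * Qc)) := by
    rw [eq_div_iff hden]
    field_simp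
    field_simp at e0
    linear_combination (-1) * e0
  refine ⟨key, by rw [hvbar, ← mul_assoc]; exact key, ?_⟩
  rw [eq_div_iff hden2]
  have h := (eq_div_iff hden).mp key
  linear_combination h
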